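/- Let α > 0, β > 0, δ ≥ 0, N ≥ 1, and let cₙ ≥ 0, x₁⁽ⁿ⁾, x₂⁽ⁿ⁾ ∈ ℝ for n = 1,…,N. Define G(x₁, x₂) = Σₙ₌₁^N cₙ (β/(β + dₙ))^α with dₙ = ((x₁ − x₁⁽ⁿ⁾)² + (x₂ − x₂⁽ⁿ⁾)²)/2. Fix x₁, x₂, h ∈ ℝ and suppose that for every x₂′ in the closed interval with endpoints x₂ and x₂ + h, and every n, |x₂′ − x₂⁽ⁿ⁾| ≤ δ. Then |G(x₁, x₂ + h) − G(x₁, x₂)| ≤ (α/β) · δ · (Σₙ₌₁^N cₙ) · |h|. -/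

import Mathlib

/-- Marginalized deviation bound (Theorem 2 of the paper): for the Gamma-marginalized GP
posterior mean `G(x₁, x₂) = Σₙ cₙ (β/(β + dₙ))^α` with
`dₙ = ((x₁ − x₁ⁿ)² + (x₂ − x₂ⁿ)²)/2` and nonnegative weights, if every point on the segment
from `x₂` to `x₂ + h` has second coordinate within `δ` of every training point's second
coordinate, then `|G(x₁, x₂ + h) − G(x₁, x₂)| ≤ (α/β) δ (Σₙ cₙ) |h|`. -/
theorem marginalized_gp_mean_deviation_bound (α β δ : ℝ) (hα : 0 < α) (hβ : 0 < β)
    (hδ : 0 ≤ δ) (N : ℕ) (hN : 1 ≤ N) (c x1 x2 : ℕ → ℝ)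
    (hc : ∀ n ∈ Finset.range N, 0 ≤ c n)
    (x₁ x₂ h : ℝ)
    (hx : ∀ x₂' ∈ Set.uIcc x₂ (x₂ + h), ∀ n ∈ Finset.range N, |x₂' - x2 n| ≤ δ) :
    |(∑ n ∈ Finset.range N,
        c n * (β / (β + ((x₁ - x1 n) ^ 2 + (x₂ + h - x2 n) ^ 2) / 2)) ^ α)
      - ∑ n ∈ Finset.range N,
          c n * (β / (β + ((x₁ - x1 n) ^ 2 + (x₂ - x2 n) ^ 2) / 2)) ^ α|
      ≤ (α / β) * δ * (∑ n ∈ Finset.range N, c n) * |h| := by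
  set s : Set ℝ := Set.uIcc x₂ (x₂ + h) with hs
  set D : ℕ → ℝ → ℝ := fun n t => β + ((x₁ - x1 n) ^ 2 + (t - x2 n) ^ 2) / 2 with hD
  have hDge : ∀ n t, β ≤ D n t := by
    intro n t
    have h1 : 0 ≤ ((x₁ - x1 n) ^ 2 + (t - x2 n) ^ 2) / 2 := by positivity
    simp only [hD]; linarith
  have hDpos : ∀ n t, 0 < D n t := fun n t => lt_of_lt_of_le hβ (hDge n t)
  set f : ℝ → ℝ := fun t => ∑ n ∈ Finset.range N, c n * (β / D n t) ^ α with hf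
  set f' : ℝ → ℝ := fun t => ∑ n ∈ Finset.range N,
      c n * ((0 * D n t - β * (t - x2 n)) / (D n t) ^ 2 * α * (β / D n t) ^ (α - 1)) with hf'
  have hderiv : ∀ t ∈ s, HasDerivWithinAt f (f' t) s t := by
    intro t ht
    apply HasDerivAt.hasDerivWithinAt
    apply HasDerivAt.fun_sum
    intro n hn
    have hd : HasDerivAt (fun u => D n u) (t - x2 n) t := by
      have h1 : HasDerivAt (fun u : ℝ => (u - x2 n) ^ 2) (2 * (t - x2 n) ^ 1 * 1) t :=
        (((hasDerivAt_id t).sub_const (x2 n)).pow 2)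
      have h2 := (((hasDerivAt_const t ((x₁ - x1 n) ^ 2)).fun_add h1).div_const 2).const_add β
      exact h2.congr_deriv (by ring)
    have hq : HasDerivAt (fun u => β / D n u)
        ((0 * D n t - β * (t - x2 n)) / (D n t) ^ 2) t :=
      (hasDerivAt_const t β).div hd (ne_of_gt (hDpos n t))
    have hpow : HasDerivAt (fun u => (β / D n u) ^ α)
        ((0 * D n t - β * (t - x2 n)) / (D n t) ^ 2 * α * (β / D n t) ^ (α - 1)) t := by
      apply hq.rpow_const
      left
      exact ne_of_gt (div_pos hβ (hDpos n t))
    exact hpow.const_mul (c n)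
  have hbound : ∀ t ∈ s, ‖f' t‖ ≤ (α / β) * δ * (∑ n ∈ Finset.range N, c n) := by
    intro t ht
    rw [Real.norm_eq_abs]
    calc |f' t| ≤ ∑ n ∈ Finset.range N,
        |c n * ((0 * D n t - β * (t - x2 n)) / (D n t) ^ 2 * α * (β / D n t) ^ (α - 1))| :=
          Finset.abs_sum_le_sum_abs _ _
      _ ≤ ∑ n ∈ Finset.range N, c n * ((α / β) * δ) := by
          apply Finset.sum_le_sum
          intro n hn
          have hcn := hc n hn
          have hDp := hDpos n t
          have hdel : |t - x2 n| ≤ δ := hx t ht n hn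
          rw [abs_mul, abs_of_nonneg hcn]
          apply mul_le_mul_of_nonneg_left _ hcn
          -- bound the derivative factor
          have hkey : |(0 * D n t - β * (t - x2 n)) / (D n t) ^ 2 * α * (β / D n t) ^ (α - 1)|
              = (β / D n t) ^ α / D n t * α * |t - x2 n| := by
            rw [abs_mul, abs_mul]
            rw [abs_of_pos hα, abs_of_pos (Real.rpow_pos_of_pos (div_pos hβ hDp) _)]
            rw [zero_mul, zero_sub, abs_div, abs_neg, abs_mul, abs_of_pos hβ,
              abs_of_pos (pow_pos hDp 2)]
            rw [Real.rpow_sub (div_pos hβ hDp), Real.rpow_one]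
            field_simp
          rw [hkey]
          have h1 : (β / D n t) ^ α ≤ 1 := by
            apply Real.rpow_le_one (le_of_lt (div_pos hβ hDp)) _ (le_of_lt hα)
            rw [div_le_one hDp]
            exact hDge n t
          have h2 : (β / D n t) ^ α / D n t ≤ 1 / β :=
            div_le_div₀ zero_le_one h1 hβ (hDge n t)
          have h3 : (β / D n t) ^ α / D n t * α * |t - x2 n| ≤ 1 / β * α * δ := by
            gcongr
          exact h3.trans (le_of_eq (by ring))
      _ = (α / β) * δ * (∑ n ∈ Finset.range N, c n) := by
          rw [← Finset.sum_mul]; ring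
  have hmvt := (convex_uIcc x₂ (x₂ + h)).norm_image_sub_le_of_norm_hasDerivWithin_le
    hderiv hbound (Set.left_mem_uIcc (a := x₂) (b := x₂ + h))
    (Set.right_mem_uIcc (a := x₂) (b := x₂ + h))
  simp only [Real.norm_eq_abs, hf] at hmvt
  have : x₂ + h - x₂ = h := by ring
  rw [this] at hmvt
  simpa [hD] using hmvt
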